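/- For any fair division instance with two agents having monotone subadditive valuations, there exists a complete EF1 allocation A with NSW(A) ≥ (1/√2)·NSW(A*), where A* is a Nash-optimal allocation. -/

import Mathlib

lemma sqrt_half_bound {x y : ℝ} (hy : 0 ≤ y) (h : x ≤ 2 * y) :
    (1 / Real.sqrt 2) * Real.sqrt x ≤ Real.sqrt y := by
  rcases le_or_gt x 0 with hx | hx
  · rw [Real.sqrt_eq_zero'.mpr hx, mul_zero]
    exact Real.sqrt_nonneg y
  · have h1 : (1 / Real.sqrt 2) * Real.sqrt x = Real.sqrt (x / 2) := by
      rw [Real.sqrt_div hx.le, one_div, inv_mul_eq_div]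
    rw [h1]
    exact Real.sqrt_le_sqrt (by linarith)

lemma cutLemma {m : ℕ} (u : Finset (Fin m) → ℝ)
    (hmono : ∀ S T : Finset (Fin m), S ⊆ T → u S ≤ u T) :
    ∀ (n : ℕ) (X Y : Finset (Fin m)), Y.card = n → Disjoint X Y → Y.Nonempty →
      (∀ g ∈ Y, u X < u (Y.erase g)) →
      ∃ X' Y' : Finset (Fin m), Disjoint X' Y' ∧ X' ∪ Y' = X ∪ Y ∧ X ⊆ X' ∧
        u X < u Y' ∧
        (∃ g ∈ Y', u (Y'.erase g) ≤ u X') ∧ (∃ h ∈ X', u (X'.erase h) ≤ u Y') := by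
  intro n
  induction n using Nat.strong_induction_on with
  | _ n ih =>
    intro X Y hcard hdisj hne hstrong
    obtain ⟨g, hg⟩ := hne
    have hgX : g ∉ X := fun h => (Finset.disjoint_left.mp hdisj h hg)
    have hY1ne : (Y.erase g).Nonempty := by
      rcases Finset.eq_empty_or_nonempty (Y.erase g) with h | h
      · exfalso
        have h2 : u X < u (Y.erase g) := hstrong g hg
        rw [h] at h2
        exact absurd (hmono ∅ X (Finset.empty_subset X)) (not_le.mpr h2)
      · exact h
    have hdisj₁ : Disjoint (insert g X) (Y.erase g) := by
      rw [Finset.disjoint_left]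
      intro a ha ha'
      rcases Finset.mem_insert.mp ha with rfl | ha
      · exact (Finset.mem_erase.mp ha').1 rfl
      · exact Finset.disjoint_left.mp hdisj ha (Finset.mem_of_mem_erase ha')
    have hunion₁ : insert g X ∪ Y.erase g = X ∪ Y := by
      ext a
      simp only [Finset.mem_union, Finset.mem_insert, Finset.mem_erase]
      constructor
      · rintro ((rfl | h) | ⟨-, h⟩)
        · exact Or.inr hg
        · exact Or.inl h
        · exact Or.inr h
      · rintro (h | h)
        · exact Or.inl (Or.inr h)
        · by_cases hag : a = g
          · exact Or.inl (Or.inl hag)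
          · exact Or.inr ⟨hag, h⟩
    by_cases hs : ∀ g' ∈ Y.erase g, u (insert g X) < u ((Y.erase g).erase g')
    · have hlt : (Y.erase g).card < n := by
        rw [← hcard]; exact Finset.card_erase_lt_of_mem hg
      obtain ⟨X', Y', h1, h2, h3, h5, h6, h7⟩ :=
        ih _ hlt (insert g X) (Y.erase g) rfl hdisj₁ hY1ne hs
      exact ⟨X', Y', h1, by rw [h2, hunion₁], (Finset.subset_insert g X).trans h3,
        lt_of_le_of_lt (hmono X (insert g X) (Finset.subset_insert g X)) h5, h6, h7⟩
    · push_neg at hs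
      obtain ⟨g', hg', hle⟩ := hs
      refine ⟨insert g X, Y.erase g, hdisj₁, hunion₁, Finset.subset_insert g X,
        hstrong g hg, ⟨g', hg', hle⟩, ⟨g, Finset.mem_insert_self g X, ?_⟩⟩
      rw [Finset.erase_insert hgX]
      exact le_of_lt (hstrong g hg)

lemma packLemma {m : ℕ}
    (v : Fin 2 → Finset (Fin m) → ℝ)
    (hnonneg : ∀ i S, 0 ≤ v i S)
    (hmono : ∀ i (S T : Finset (Fin m)), S ⊆ T → v i S ≤ v i T)
    (X Y : Finset (Fin m)) (hd : Disjoint X Y) (hu : X ∪ Y = Finset.univ)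
    (h01 : Y ≠ ∅ → ∃ g ∈ Y, v 0 (Y \ {g}) ≤ v 0 X)
    (h10 : X ≠ ∅ → ∃ g ∈ X, v 1 (X \ {g}) ≤ v 1 Y)
    (hprod : ∀ B : Fin 2 → Finset (Fin m),
        Disjoint (B 0) (B 1) → B 0 ∪ B 1 = (Finset.univ : Finset (Fin m)) →
        v 0 (B 0) * v 1 (B 1) ≤ 2 * (v 0 X * v 1 Y)) :
    ∃ A : Fin 2 → Finset (Fin m),
      Disjoint (A 0) (A 1) ∧
      A 0 ∪ A 1 = (Finset.univ : Finset (Fin m)) ∧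
      (∀ i j, A j ≠ ∅ → ∃ g ∈ A j, v i (A j \ {g}) ≤ v i (A i)) ∧
      (∀ B : Fin 2 → Finset (Fin m),
        Disjoint (B 0) (B 1) →
        B 0 ∪ B 1 = (Finset.univ : Finset (Fin m)) →
        (1 / Real.sqrt 2) * Real.sqrt (v 0 (B 0) * v 1 (B 1)) ≤
          Real.sqrt (v 0 (A 0) * v 1 (A 1))) := by
  refine ⟨![X, Y], by simpa using hd, by simpa using hu, ?_, ?_⟩
  · have hself : ∀ (i : Fin 2) (Z : Finset (Fin m)), Z ≠ ∅ →
        ∃ g ∈ Z, v i (Z \ {g}) ≤ v i Z := by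
      intro i Z hZ
      obtain ⟨g, hg⟩ := Finset.nonempty_iff_ne_empty.mpr hZ
      exact ⟨g, hg, hmono i _ _ Finset.sdiff_subset⟩
    intro i j
    fin_cases i <;> fin_cases j <;>
      simp only [Matrix.cons_val_zero, Matrix.cons_val_one, Matrix.head_cons]
    · exact hself 0 X
    · exact fun h => h01 h
    · exact fun h => h10 h
    · exact hself 1 Y
  · intro B hBd hBu
    simp only [Matrix.cons_val_zero, Matrix.cons_val_one, Matrix.head_cons]
    exact sqrt_half_bound (mul_nonneg (hnonneg 0 X) (hnonneg 1 Y)) (hprod B hBd hBu)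

lemma prod_le_aux {a b c d : ℝ} (h1 : a ≤ 2 * c) (h2 : b ≤ d) (hb : 0 ≤ b) (hc : 0 ≤ c) :
    a * b ≤ 2 * (c * d) := by
  nlinarith [mul_le_mul_of_nonneg_right h1 hb, mul_le_mul_of_nonneg_left h2 hc]

theorem stmt_10 (m : ℕ)
    (v : Fin 2 → Finset (Fin m) → ℝ)
    (hnonneg : ∀ i S, 0 ≤ v i S)
    (hnorm : ∀ i, v i ∅ = 0)
    (hmono : ∀ i (S T : Finset (Fin m)), S ⊆ T → v i S ≤ v i T)
    (hsub : ∀ i (S T : Finset (Fin m)), v i (S ∪ T) ≤ v i S + v i T) :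
    ∃ A : Fin 2 → Finset (Fin m),
      Disjoint (A 0) (A 1) ∧
      A 0 ∪ A 1 = (Finset.univ : Finset (Fin m)) ∧
      (∀ i j, A j ≠ ∅ → ∃ g ∈ A j, v i (A j \ {g}) ≤ v i (A i)) ∧
      (∀ B : Fin 2 → Finset (Fin m),
        Disjoint (B 0) (B 1) →
        B 0 ∪ B 1 = (Finset.univ : Finset (Fin m)) →
        (1 / Real.sqrt 2) * Real.sqrt (v 0 (B 0) * v 1 (B 1)) ≤
          Real.sqrt (v 0 (A 0) * v 1 (A 1))) := by
  classical
  obtain ⟨S, -, hSmax⟩ := Finset.exists_max_image (Finset.univ : Finset (Finset (Fin m)))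
    (fun S => v 0 S * v 1 Sᶜ) ⟨∅, Finset.mem_univ ∅⟩
  have hST : Disjoint S Sᶜ := disjoint_compl_right
  have hSTu : S ∪ Sᶜ = Finset.univ := Finset.union_compl S
  have hany : ∀ (i : Fin 2) (Z : Finset (Fin m)), Z ≠ ∅ → ∃ g ∈ Z, v i (Z \ {g}) ≤ v i Z := by
    intro i Z hZ
    obtain ⟨g, hg⟩ := Finset.nonempty_iff_ne_empty.mpr hZ
    exact ⟨g, hg, hmono i _ _ Finset.sdiff_subset⟩
  have hBle : ∀ B : Fin 2 → Finset (Fin m), Disjoint (B 0) (B 1) →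
      B 0 ∪ B 1 = (Finset.univ : Finset (Fin m)) →
      v 0 (B 0) * v 1 (B 1) ≤ v 0 S * v 1 Sᶜ := by
    intro B hd hu
    have h1 : B 1 = (B 0)ᶜ := by
      ext a
      simp only [Finset.mem_compl]
      constructor
      · intro h h'
        exact Finset.disjoint_left.mp hd h' h
      · intro h
        have h2 := Finset.mem_univ (α := Fin m) a
        rw [← hu, Finset.mem_union] at h2
        tauto
    rw [h1]
    exact hSmax (B 0) (Finset.mem_univ _)
  by_cases h01 : Sᶜ = ∅ ∨ ∃ g ∈ Sᶜ, v 0 (Sᶜ \ {g}) ≤ v 0 S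
  · by_cases h10 : S = ∅ ∨ ∃ g ∈ S, v 1 (S \ {g}) ≤ v 1 Sᶜ
    · -- Case 1: the NSW-optimal allocation is already EF1
      apply packLemma v hnonneg hmono S Sᶜ hST hSTu
      · intro h; rcases h01 with h' | h'
        · exact absurd h' h
        · exact h'
      · intro h; rcases h10 with h' | h'
        · exact absurd h' h
        · exact h'
      · intro B hd hu
        have h2 := hBle B hd hu
        nlinarith [mul_nonneg (hnonneg 0 S) (hnonneg 1 Sᶜ)]
    · -- Case 3: agent 1 strongly envies S
      push_neg at h10
      obtain ⟨hSne, hstrong⟩ := h10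
      have hstrong' : ∀ g ∈ S, v 1 Sᶜ < v 1 (S.erase g) := by
        intro g hg; rw [Finset.erase_eq]; exact hstrong g hg
      obtain ⟨X', Y', hd', hu', hTX', hlt, ⟨g1, hg1, hw1⟩, ⟨h1, hh1, hw2⟩⟩ :=
        cutLemma (v 1) (hmono 1) S.card Sᶜ S rfl disjoint_compl_left
          hSne hstrong'
      have huniv : X' ∪ Y' = Finset.univ := by
        rw [hu', Finset.union_comm, Finset.union_compl]
      have hsubuniv : v 0 Finset.univ ≤ v 0 X' + v 0 Y' := by
        rw [← huniv]; exact hsub 0 X' Y'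
      have hSuniv : v 0 S ≤ v 0 Finset.univ := hmono 0 _ _ (Finset.subset_univ S)
      by_cases hw : v 0 Y' ≤ v 0 X'
      · apply packLemma v hnonneg hmono X' Y' hd' huniv
        · intro h
          obtain ⟨g, hg, hgle⟩ := hany 0 Y' h
          exact ⟨g, hg, hgle.trans hw⟩
        · intro _
          exact ⟨h1, hh1, by rw [← Finset.erase_eq]; exact hw2⟩
        · intro B hd hu
          refine (hBle B hd hu).trans (prod_le_aux ?_ hlt.le (hnonneg 1 Sᶜ) (hnonneg 0 X'))
          linarith
      · push_neg at hw
        apply packLemma v hnonneg hmono Y' X' hd'.symm (by rw [Finset.union_comm]; exact huniv)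
        · intro h
          obtain ⟨g, hg, hgle⟩ := hany 0 X' h
          exact ⟨g, hg, hgle.trans hw.le⟩
        · intro _
          exact ⟨g1, hg1, by rw [← Finset.erase_eq]; exact hw1⟩
        · intro B hd hu
          have h2 : v 1 Sᶜ ≤ v 1 X' := hmono 1 _ _ hTX'
          refine (hBle B hd hu).trans (prod_le_aux ?_ h2 (hnonneg 1 Sᶜ) (hnonneg 0 Y'))
          linarith
  · -- Case 2: agent 0 strongly envies Sᶜ
    push_neg at h01
    obtain ⟨hTne, hstrong⟩ := h01
    have hstrong' : ∀ g ∈ Sᶜ, v 0 S < v 0 (Sᶜ.erase g) := by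
      intro g hg; rw [Finset.erase_eq]; exact hstrong g hg
    obtain ⟨X', Y', hd', hu', hTX', hlt, ⟨g1, hg1, hw1⟩, ⟨h1, hh1, hw2⟩⟩ :=
      cutLemma (v 0) (hmono 0) Sᶜ.card S Sᶜ rfl disjoint_compl_right
        hTne hstrong'
    have huniv : X' ∪ Y' = Finset.univ := by rw [hu', Finset.union_compl]
    have hsubuniv : v 1 Finset.univ ≤ v 1 X' + v 1 Y' := by
      rw [← huniv]; exact hsub 1 X' Y'
    have hSuniv : v 1 Sᶜ ≤ v 1 Finset.univ := hmono 1 _ _ (Finset.subset_univ _)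
    by_cases hw : v 1 X' ≤ v 1 Y'
    · apply packLemma v hnonneg hmono X' Y' hd' huniv
      · intro _
        exact ⟨g1, hg1, by rw [← Finset.erase_eq]; exact hw1⟩
      · intro h
        obtain ⟨g, hg, hgle⟩ := hany 1 X' h
        exact ⟨g, hg, hgle.trans hw⟩
      · intro B hd hu
        have h2 : v 0 S ≤ v 0 X' := hmono 0 _ _ hTX'
        have h3 : v 1 Sᶜ ≤ 2 * v 1 Y' := by linarith
        have h4 := hBle B hd hu
        nlinarith [mul_le_mul h2 h3 (hnonneg 1 Sᶜ) (hnonneg 0 X'), hnonneg 1 Y', hnonneg 0 X']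
    · push_neg at hw
      apply packLemma v hnonneg hmono Y' X' hd'.symm (by rw [Finset.union_comm]; exact huniv)
      · intro _
        exact ⟨h1, hh1, by rw [← Finset.erase_eq]; exact hw2⟩
      · intro h
        obtain ⟨g, hg, hgle⟩ := hany 1 Y' h
        exact ⟨g, hg, hgle.trans hw.le⟩
      · intro B hd hu
        have h3 : v 1 Sᶜ ≤ 2 * v 1 X' := by linarith
        have h4 := hBle B hd hu
        nlinarith [mul_le_mul hlt.le h3 (hnonneg 1 Sᶜ) (hnonneg 0 Y'), hnonneg 1 X', hnonneg 0 Y']
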